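/- Fix α ∈ ℤ with α ≠ 0 and ν > 0, and let λ ∈ ℂ with Re λ > 0. Set μ = ν^{-1/2}√(λ + α²ν), where the square root is chosen with positive real part. Then the function G(y,z) = (1/(2νμ))(e^{-μ|y-z|} + e^{-μ(y+z)}) + (α(α+μ)/(λμ)) e^{-μ(y+z)}, for y, z ≥ 0, satisfies, for each fixed y > 0: (λ - ν(∂_z² - α²)) G(y,·) = 0 on (0,y) ∪ (y,∞), the boundary condition ν(∂_z + α)G(y,z)|_{z=0} = 0, the continuity [G(y,·)]_{z=y} = 0, and the jump condition ν[∂_z G(y,·)]_{z=y} = -1 (i.e. the derivative from above minus the derivative from below equals -1/ν). -/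

import Mathlib

open Filter Set

noncomputable def Fk (A B a c b d : ℂ) : ℝ → ℂ := fun x =>
  A * Complex.exp (a * x + b) + B * Complex.exp (c * x + d)

lemma hd_cexp (a b : ℂ) (z : ℝ) :
    HasDerivAt (fun x : ℝ => Complex.exp (a * x + b)) (a * Complex.exp (a * z + b)) z := by
  have h2 : HasDerivAt (fun w : ℂ => a * w + b) a (z : ℂ) := by
    simpa using ((hasDerivAt_id (z : ℂ)).const_mul a).add_const b
  simpa [mul_comm] using h2.cexp.comp_ofReal

lemma Fk_hasDerivAt (A B a c b d : ℂ) (z : ℝ) :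
    HasDerivAt (Fk A B a c b d) (Fk (A * a) (B * c) a c b d z) z := by
  have h := ((hd_cexp a b z).const_mul A).add ((hd_cexp c d z).const_mul B)
  convert h using 1
  · rfl
  · rfl
  simp [Fk]; ring

lemma Fk_deriv (A B a c b d : ℂ) : deriv (Fk A B a c b d) = Fk (A * a) (B * c) a c b d :=
  funext fun z => (Fk_hasDerivAt A B a c b d z).deriv

lemma Fk_cont (A B a c b d : ℂ) : Continuous (Fk A B a c b d) := by
  unfold Fk; fun_prop

/-- The explicit formula for the resolvent kernel of the Stokes problem
`(λ - νΔ_α)G = δ_y` on the half-line with boundary condition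
`ν(∂_z + α)G|_{z=0} = 0`: it solves the resolvent equation away from `z = y`,
satisfies the boundary condition, is continuous across `z = y`, and its
derivative has the jump `ν[∂_z G]_{z=y} = -1`. -/
theorem stokes_resolvent_kernel (α : ℤ) (hα : α ≠ 0) (ν : ℝ) (hν : 0 < ν)
    (lam μ : ℂ) (hlam : 0 < lam.re) (hμ : μ ^ 2 = (lam + (α : ℂ) ^ 2 * ν) / ν)
    (hμre : 0 < μ.re) (y : ℝ) (hy : 0 < y) (G : ℝ → ℂ)
    (hG : ∀ z : ℝ, G z =
      (1 / (2 * ν * μ)) * (Complex.exp (-μ * (|y - z| : ℝ)) + Complex.exp (-μ * (y + z)))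
        + ((α : ℂ) * ((α : ℂ) + μ) / (lam * μ)) * Complex.exp (-μ * (y + z))) :
    (∀ z : ℝ, z ∈ Set.Ioo 0 y ∪ Set.Ioi y →
        lam * G z - ν * (deriv (deriv G) z - (α : ℂ) ^ 2 * G z) = 0) ∧
    (ν : ℂ) * (deriv G 0 + (α : ℂ) * G 0) = 0 ∧
    ContinuousAt G y ∧
    ∃ Lp Lm : ℂ,
      Tendsto (deriv G) (nhdsWithin y (Set.Ioi y)) (nhds Lp) ∧
      Tendsto (deriv G) (nhdsWithin y (Set.Iio y)) (nhds Lm) ∧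
      (ν : ℂ) * (Lp - Lm) = -1 := by
  have hν0 : (ν : ℂ) ≠ 0 := by
    exact_mod_cast hν.ne'
  have hμ0 : μ ≠ 0 := fun h => by simp [h] at hμre
  have hlam0 : lam ≠ 0 := fun h => by simp [h] at hlam
  have hμ' : μ ^ 2 * ν = lam + (α : ℂ) ^ 2 * ν := by
    rwa [eq_div_iff hν0] at hμ
  set c1 : ℂ := 1 / (2 * ν * μ) with hc1
  set c2 : ℂ := (α : ℂ) * ((α : ℂ) + μ) / (lam * μ) with hc2
  set Gm : ℝ → ℂ := Fk c1 (c1 + c2) μ (-μ) (-(μ * y)) (-(μ * y)) with hGm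
  set Gp : ℝ → ℂ := Fk c1 (c1 + c2) (-μ) (-μ) (μ * y) (-(μ * y)) with hGp
  have hm : ∀ x ∈ Iio y, G x = Gm x := by
    intro x hx
    rw [hG x, show |y - x| = y - x from abs_of_nonneg (by simp only [mem_Iio] at hx; linarith),
      show -μ * ((y - x : ℝ) : ℂ) = μ * x + -(μ * y) by push_cast; ring,
      show -μ * ((y : ℂ) + (x : ℂ)) = -μ * x + -(μ * y) by ring]
    simp only [hGm, Fk]; ring
  have hp : ∀ x ∈ Ioi y, G x = Gp x := by
    intro x hx
    rw [hG x, show |y - x| = -(y - x) from abs_of_neg (by simp only [mem_Ioi] at hx; linarith),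
      show -μ * ((-(y - x) : ℝ) : ℂ) = -μ * x + μ * y by push_cast; ring,
      show -μ * ((y : ℂ) + (x : ℂ)) = -μ * x + -(μ * y) by ring]
    simp only [hGp, Fk]; ring
  have hm' : ∀ x ∈ Iio y, G =ᶠ[nhds x] Gm := fun x hx =>
    Filter.eventuallyEq_of_mem (isOpen_Iio.mem_nhds hx) hm
  have hp' : ∀ x ∈ Ioi y, G =ᶠ[nhds x] Gp := fun x hx =>
    Filter.eventuallyEq_of_mem (isOpen_Ioi.mem_nhds hx) hp
  refine ⟨?_, ?_, ?_, ?_⟩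
  · intro z hz
    rcases hz with hz | hz
    · have hE := hm' z hz.2
      have hgz : G z = Gm z := hE.eq_of_nhds
      have hd2 : deriv (deriv G) z = deriv (deriv Gm) z := hE.deriv.deriv_eq
      have hsnd : deriv (deriv Gm) z = μ ^ 2 * Gm z := by
        rw [hGm, Fk_deriv, Fk_deriv]; simp only [Fk]; ring
      rw [hgz, hd2, hsnd]
      linear_combination (-(Gm z)) * hμ'
    · have hE := hp' z hz
      have hgz : G z = Gp z := hE.eq_of_nhds
      have hd2 : deriv (deriv G) z = deriv (deriv Gp) z := hE.deriv.deriv_eq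
      have hsnd : deriv (deriv Gp) z = μ ^ 2 * Gp z := by
        rw [hGp, Fk_deriv, Fk_deriv]; simp only [Fk]; ring
      rw [hgz, hd2, hsnd]
      linear_combination (-(Gp z)) * hμ'
  · have h0 : (0 : ℝ) ∈ Iio y := hy
    have hd0 : deriv G 0 = deriv Gm 0 := (hm' 0 h0).deriv_eq
    have hG0 : G 0 = Gm 0 := (hm' 0 h0).eq_of_nhds
    rw [hd0, hG0, hGm, Fk_deriv]
    simp only [Fk, Complex.ofReal_zero, mul_zero, zero_add, neg_zero]
    set E := Complex.exp (-(μ * y)) with hE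
    rw [hc1, hc2]
    field_simp
    linear_combination (-2 * E * (α : ℂ)) * hμ'
  · have hcG : Continuous G := by
      rw [funext hG]
      fun_prop
    exact hcG.continuousAt
  · refine ⟨deriv Gp y, deriv Gm y, ?_, ?_, ?_⟩
    · have hcont : Continuous (deriv Gp) := by rw [hGp, Fk_deriv]; exact Fk_cont _ _ _ _ _ _
      refine Tendsto.congr' ?_ ((hcont.tendsto y).mono_left nhdsWithin_le_nhds)
      exact eventually_mem_nhdsWithin.mono fun x hx => ((hp' x hx).deriv_eq).symm
    · have hcont : Continuous (deriv Gm) := by rw [hGm, Fk_deriv]; exact Fk_cont _ _ _ _ _ _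
      refine Tendsto.congr' ?_ ((hcont.tendsto y).mono_left nhdsWithin_le_nhds)
      exact eventually_mem_nhdsWithin.mono fun x hx => ((hm' x hx).deriv_eq).symm
    · rw [hGp, hGm, Fk_deriv, Fk_deriv]
      simp only [Fk]
      rw [show -μ * (y : ℂ) + μ * y = 0 by ring, show μ * (y : ℂ) + -(μ * y) = 0 by ring,
        Complex.exp_zero]
      have hkey : (ν : ℂ) * (-2 * c1 * μ) = -1 := by
        rw [hc1]; field_simp
      calc (ν:ℂ) * (c1 * -μ * 1 + (c1 + c2) * -μ * Complex.exp (-μ * ↑y + -(μ * ↑y)) -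
            (c1 * μ * 1 + (c1 + c2) * -μ * Complex.exp (-μ * ↑y + -(μ * ↑y))))
          = (ν : ℂ) * (-2 * c1 * μ) := by ring
        _ = -1 := hkey
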